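/- Under condition (A) as above, the functional λ(ψ) = ∫_X (1/δ) E_v ∫_{τ(v)}^{τ(v)+δ} ψ(u_t) dt μ(dv) is continuous from b₀(X) to ℝ: if ψ_n b-converges to ψ (uniformly bounded, uniformly convergent on bounded sets), then λ(ψ_n) → λ(ψ). -/

import Mathlib

open MeasureTheory Filter Topology Bornology
open scoped ENNReal

/-- Under condition (A), the functional
`λ(ψ) = ∫ (1/δ) E_v ∫_{τ(v)}^{τ(v)+δ} ψ(u_t) dt dμ(v)` is continuous from `b₀(X)` to `ℝ`:
if `ψ_n` b-converges to `ψ` then `λ(ψ_n) → λ(ψ)`. -/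
theorem stmt9
    {X : Type*} [MetricSpace X] [TopologicalSpace.SeparableSpace X] [CompleteSpace X]
    [MeasurableSpace X] [BorelSpace X]
    {Ω : Type*} {mΩ : MeasurableSpace Ω} (P : Measure Ω) [IsProbabilityMeasure P]
    (u : ℝ → X → Ω → X)
    (hu : Measurable fun p : Ω × ℝ × X => u p.2.1 p.2.2 p.1)
    (τ : X → Ω → ℝ)
    (hτ0 : ∀ v ω, 0 ≤ τ v ω)
    (hτmeas : Measurable fun p : Ω × X => τ p.2 p.1)
    -- (0.75): stopping times are uniformly a.s. finite on compacts
    (hτfin : ∀ K : Set X, IsCompact K → ∀ η > (0:ℝ), ∃ s0 : ℝ, ∀ s ≥ s0, ∀ v ∈ K,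
      P {ω | s ≤ τ v ω} ≤ ENNReal.ofReal η)
    -- (0.74): trajectories starting in a compact set stay in a bounded set
    (htraj : ∀ K : Set X, IsCompact K → ∀ T > (0:ℝ), ∀ η > (0:ℝ), ∃ B : Set X,
      IsBounded B ∧ ∀ v ∈ K,
        (1 : ℝ≥0∞) - ENNReal.ofReal η ≤ P {ω | ∀ t ∈ Set.Icc 0 T, u t v ω ∈ B})
    (μ : Measure X) [IsProbabilityMeasure μ]
    (δ : ℝ) (hδ : 0 < δ)
    (ψn : ℕ → X → ℝ) (ψ : X → ℝ)
    (hψnmeas : ∀ n, Measurable (ψn n)) (hψmeas : Measurable ψ)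
    (hψbdd : ∃ C, ∀ x, |ψ x| ≤ C)
    -- b-convergence of `ψ_n` to `ψ`
    (hbdd : ∃ C : ℝ, ∀ n v, |ψn n v| ≤ C)
    (hbconv : ∀ B : Set X, IsBounded B → ∀ η > (0:ℝ),
      ∃ N, ∀ n ≥ N, ∀ v ∈ B, |ψn n v - ψ v| ≤ η) :
    Filter.Tendsto
      (fun n => (1 / δ) * ∫ v, (∫ ω,
        (∫ t in Set.Icc (τ v ω) (τ v ω + δ), ψn n (u t v ω)) ∂P) ∂μ)
      atTop
      (𝓝 ((1 / δ) * ∫ v, (∫ ω,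
        (∫ t in Set.Icc (τ v ω) (τ v ω + δ), ψ (u t v ω)) ∂P) ∂μ)) := by
  obtain ⟨C₀, hC₀⟩ := hbdd
  set C : ℝ := max C₀ 0 with hCdef
  have hC : ∀ n v, |ψn n v| ≤ C := fun n v => (hC₀ n v).trans (le_max_left _ _)
  have hCnn : (0:ℝ) ≤ C := le_max_right _ _
  -- pointwise convergence from b-convergence applied to singletons
  have hpt : ∀ x : X, Tendsto (fun n => ψn n x) atTop (𝓝 (ψ x)) := by
    intro x
    rw [Metric.tendsto_atTop]
    intro ε hε
    obtain ⟨N, hN⟩ := hbconv {x} isBounded_singleton (ε/2) (by linarith)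
    refine ⟨N, fun n hn => ?_⟩
    have := hN n hn x rfl
    rw [Real.dist_eq]
    linarith
  -- measurability helpers
  have huω : ∀ v ω, Measurable fun t : ℝ => u t v ω := fun v ω =>
    hu.comp (measurable_const.prodMk (measurable_id.prodMk measurable_const))
  have huj : Measurable fun q : (X × Ω) × ℝ => u q.2 q.1.1 q.1.2 :=
    hu.comp ((measurable_fst.snd).prodMk (measurable_snd.prodMk measurable_fst.fst))
  have hτj : Measurable fun q : (X × Ω) × ℝ => τ q.1.1 q.1.2 :=
    hτmeas.comp ((measurable_fst.snd).prodMk measurable_fst.fst)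
  have hSmeas : MeasurableSet {q : (X × Ω) × ℝ |
      τ q.1.1 q.1.2 ≤ q.2 ∧ q.2 ≤ τ q.1.1 q.1.2 + δ} :=
    (measurableSet_le hτj measurable_snd).inter
      (measurableSet_le measurable_snd (hτj.add_const δ))
  -- rewrite set integrals as indicator integrals
  have hrw : ∀ (f : X → ℝ) (v : X) (ω : Ω),
      (∫ t in Set.Icc (τ v ω) (τ v ω + δ), f (u t v ω))
        = ∫ t, Set.indicator (Set.Icc (τ v ω) (τ v ω + δ)) (fun t => f (u t v ω)) t :=
    fun f v ω => (integral_indicator measurableSet_Icc).symm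
  -- strong measurability of the inner integral as a function of (v, ω)
  have hinner : ∀ (f : X → ℝ), Measurable f → StronglyMeasurable fun p : X × Ω =>
      ∫ t, Set.indicator (Set.Icc (τ p.1 p.2) (τ p.1 p.2 + δ)) (fun t => f (u t p.1 p.2)) t := by
    intro f hf
    have hJ : Measurable fun q : (X × Ω) × ℝ =>
        Set.indicator (Set.Icc (τ q.1.1 q.1.2) (τ q.1.1 q.1.2 + δ))
          (fun t => f (u t q.1.1 q.1.2)) q.2 := by
      have h1 : Measurable (Set.indicator {q : (X × Ω) × ℝ |
          τ q.1.1 q.1.2 ≤ q.2 ∧ q.2 ≤ τ q.1.1 q.1.2 + δ}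
          (fun q => f (u q.2 q.1.1 q.1.2))) := (hf.comp huj).indicator hSmeas
      convert h1 using 1
      funext q
      simp [Set.indicator]
    exact hJ.stronglyMeasurable.integral_prod_right'
  -- uniform bound on the inner integral
  have hb1 : ∀ n v ω, ‖∫ t in Set.Icc (τ v ω) (τ v ω + δ), ψn n (u t v ω)‖ ≤ C * δ := by
    intro n v ω
    have h := norm_integral_le_of_norm_le_const
      (μ := volume.restrict (Set.Icc (τ v ω) (τ v ω + δ))) (C := C)
      (f := fun t => ψn n (u t v ω))
      (Filter.Eventually.of_forall fun t => by rw [Real.norm_eq_abs]; exact hC n _)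
    rw [measureReal_restrict_apply_univ, Real.volume_real_Icc] at h
    have hδ' : τ v ω + δ - τ v ω = δ := by ring
    rw [hδ', max_eq_left hδ.le] at h
    exact h
  -- innermost DCT (over t)
  have h1 : ∀ v ω, Tendsto (fun n => ∫ t in Set.Icc (τ v ω) (τ v ω + δ), ψn n (u t v ω))
      atTop (𝓝 (∫ t in Set.Icc (τ v ω) (τ v ω + δ), ψ (u t v ω))) := by
    intro v ω
    refine tendsto_integral_of_dominated_convergence (fun _ => C) ?_ (integrable_const C) ?_ ?_
    · exact fun n => ((hψnmeas n).comp (huω v ω)).aestronglyMeasurable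
    · exact fun n => Filter.Eventually.of_forall fun t => by
        rw [Real.norm_eq_abs]; exact hC n _
    · exact Filter.Eventually.of_forall fun t => hpt _
  -- middle DCT (over ω)
  have h2 : ∀ v, Tendsto
      (fun n => ∫ ω, (∫ t in Set.Icc (τ v ω) (τ v ω + δ), ψn n (u t v ω)) ∂P)
      atTop (𝓝 (∫ ω, (∫ t in Set.Icc (τ v ω) (τ v ω + δ), ψ (u t v ω)) ∂P)) := by
    intro v
    refine tendsto_integral_of_dominated_convergence (fun _ => C * δ) ?_ (integrable_const _) ?_ ?_
    · intro n
      have : StronglyMeasurable fun ω =>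
          ∫ t, Set.indicator (Set.Icc (τ v ω) (τ v ω + δ)) (fun t => ψn n (u t v ω)) t :=
        (hinner (ψn n) (hψnmeas n)).comp_measurable
          (measurable_const.prodMk measurable_id)
      refine (this.aestronglyMeasurable).congr ?_
      exact Filter.Eventually.of_forall fun ω => (hrw (ψn n) v ω).symm
    · exact fun n => Filter.Eventually.of_forall fun ω => hb1 n v ω
    · exact Filter.Eventually.of_forall fun ω => h1 v ω
  -- bound for the middle integral
  have hb2 : ∀ n v, ‖∫ ω, (∫ t in Set.Icc (τ v ω) (τ v ω + δ), ψn n (u t v ω)) ∂P‖ ≤ C * δ := by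
    intro n v
    have h := norm_integral_le_of_norm_le_const (μ := P) (C := C * δ)
      (f := fun ω => ∫ t in Set.Icc (τ v ω) (τ v ω + δ), ψn n (u t v ω))
      (Filter.Eventually.of_forall fun ω => hb1 n v ω)
    simpa using h
  -- outermost DCT (over v)
  refine Tendsto.const_mul (1 / δ) ?_
  refine tendsto_integral_of_dominated_convergence (fun _ => C * δ) ?_ (integrable_const _) ?_ ?_
  · intro n
    have hsm : StronglyMeasurable fun v => ∫ ω,
        (∫ t, Set.indicator (Set.Icc (τ v ω) (τ v ω + δ)) (fun t => ψn n (u t v ω)) t) ∂P :=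
      (hinner (ψn n) (hψnmeas n)).integral_prod_right'
    refine (hsm.aestronglyMeasurable).congr ?_
    refine Filter.Eventually.of_forall fun v => ?_
    simp only [hrw (ψn n) v]
  · exact fun n => Filter.Eventually.of_forall fun v => hb2 n v
  · exact Filter.Eventually.of_forall fun v => h2 v
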